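/- Fix an integer C ≥ 2 and let (U,F) be a 3-Set Splitting instance with |F| ≥ 3. If the split graph H(U,F,C) admits a (C, |F|+1)-coloring, then (U,F) admits a splitting. -/

import Mathlib

/-- The deficiency of a vertex `v` under a coloring `c`: the number of neighbors
of `v` whose color equals `c v`. -/
noncomputable def deficiency {V α : Type*} (G : SimpleGraph V) (c : V → α) (v : V) : ℕ :=
  {w | G.Adj v w ∧ c w = c v}.ncard

/-- `c` is a `(C,D)`-coloring (with colors `Fin C`): every vertex has at most `D`
neighbors of its own color. -/
def IsDefColoring {V α : Type*} (G : SimpleGraph V) (D : ℕ) (c : V → α) : Prop :=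
  ∀ v, deficiency G c v ≤ D

/-- A splitting of a set family `F` over a universe `α`: a partition `(A, Aᶜ)` of the
universe such that every member of `F` meets both sides. -/
def HasSplitting {α : Type*} [DecidableEq α] (F : Finset (Finset α)) : Prop :=
  ∃ A : Finset α, ∀ S ∈ F, (S ∩ A).Nonempty ∧ (S \ A).Nonempty

/-- Vertices of the split graph `H(U,F,C)`: the clique side consists of
`K₁ = {v_S^1 : S ∈ F}` (tagged `false`), `K₂ = {v_S^2 : S ∈ F}` (tagged `true`) and
`K*` of size `(C-2)·(|F|+2)`; the independent side consists of `I = {w_x : x ∈ U}` and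
`Z₁` (tagged `false`), `Z₂` (tagged `true`) of size `C·(|F|+2)` each. -/
abbrev SplitVtx (α : Type*) (F : Finset (Finset α)) (C : ℕ) :=
  ((Bool × {S // S ∈ F}) ⊕ Fin ((C - 2) * (F.card + 2))) ⊕
    (α ⊕ (Bool × Fin (C * (F.card + 2))))

/-- The edges of `H(U,F,C)`, oriented from the clique side: `K₁ ∪ K₂ ∪ K*` is a clique
and `I ∪ Z₁ ∪ Z₂` is independent; `w_x` is adjacent to `v_S^1, v_S^2` iff `x ∈ S`;
each vertex of `K_i` is adjacent to each vertex of `Z_i`; each vertex of `K*` is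
adjacent to every other vertex; there are no other edges. -/
def splitRel (α : Type*) (F : Finset (Finset α)) (C : ℕ) :
    SplitVtx α F C → SplitVtx α F C → Prop
  | Sum.inl (Sum.inl _), Sum.inl _ => True
  | Sum.inl (Sum.inr _), Sum.inl _ => True
  | Sum.inl (Sum.inl (_, S)), Sum.inr (Sum.inl x) => x ∈ S.val
  | Sum.inl (Sum.inl (b, _)), Sum.inr (Sum.inr (bz, _)) => b = bz
  | Sum.inl (Sum.inr _), Sum.inr _ => True
  | Sum.inr _, _ => False

/-- The split graph `H(U,F,C)`. -/
def splitGraph (α : Type*) (F : Finset (Finset α)) (C : ℕ) :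
    SimpleGraph (SplitVtx α F C) :=
  SimpleGraph.fromRel (splitRel α F C)

private lemma def_lb {V β : Type*} [Finite V] (G : SimpleGraph V) (c : V → β) (v : V)
    (s : Finset V) (hs : ∀ w ∈ s, G.Adj v w ∧ c w = c v) :
    s.card ≤ deficiency G c v := by
  classical
  rw [deficiency, ← Set.ncard_coe_finset]
  exact Set.ncard_le_ncard (fun w hw => hs w (by simpa using hw)) (Set.toFinite _)

private lemma def_lb' {V β : Type*} [Finite V] (G : SimpleGraph V) (c : V → β) (v : V)
    (s : Finset V) (hv : v ∈ s) (hadj : ∀ w ∈ s, w ≠ v → G.Adj v w)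
    (hcol : ∀ w ∈ s, c w = c v) :
    s.card ≤ deficiency G c v + 1 := by
  classical
  have h1 : (s.erase v).card ≤ deficiency G c v :=
    def_lb G c v _ (fun w hw => ⟨hadj w (Finset.mem_of_mem_erase hw) (Finset.ne_of_mem_erase hw),
      hcol w (Finset.mem_of_mem_erase hw)⟩)
  have h2 := Finset.card_erase_of_mem hv
  omega

section
variable {α : Type*} {F : Finset (Finset α)} {C : ℕ}

private lemma adjCC (u v : (Bool × {S // S ∈ F}) ⊕ Fin ((C - 2) * (F.card + 2)))
    (h : u ≠ v) : (splitGraph α F C).Adj (Sum.inl u) (Sum.inl v) := by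
  rw [splitGraph, SimpleGraph.fromRel_adj]
  refine ⟨by simpa using h, Or.inl ?_⟩
  cases u <;> trivial

private lemma adjSI (b : Bool) (S : {S // S ∈ F}) (x : α) (hx : x ∈ S.val) :
    (splitGraph α F C).Adj (Sum.inl (Sum.inl (b, S))) (Sum.inr (Sum.inl x)) := by
  rw [splitGraph, SimpleGraph.fromRel_adj]
  exact ⟨by simp, Or.inl hx⟩

private lemma adjKZ (b : Bool) (S : {S // S ∈ F}) (j : Fin (C * (F.card + 2))) :
    (splitGraph α F C).Adj (Sum.inl (Sum.inl (b, S))) (Sum.inr (Sum.inr (b, j))) := by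
  rw [splitGraph, SimpleGraph.fromRel_adj]
  exact ⟨by simp, Or.inl rfl⟩

private lemma adjStar (j : Fin ((C - 2) * (F.card + 2))) (w : SplitVtx α F C)
    (h : w ≠ Sum.inl (Sum.inr j)) :
    (splitGraph α F C).Adj (Sum.inl (Sum.inr j)) w := by
  rw [splitGraph, SimpleGraph.fromRel_adj]
  refine ⟨h.symm, Or.inl ?_⟩
  cases w <;> trivial

end


/-- For `C ≥ 2` and `|F| ≥ 3`: if `H(U,F,C)` admits a `(C, |F|+1)`-coloring, then the
3-Set Splitting instance `(U,F)` admits a splitting. -/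
theorem stmt18 {α : Type*} [Fintype α] [DecidableEq α] (C : ℕ) (hC : 2 ≤ C)
    (F : Finset (Finset α)) (hF : ∀ S ∈ F, S.card = 3) (hF3 : 3 ≤ F.card)
    (h : ∃ c : SplitVtx α F C → Fin C,
      IsDefColoring (splitGraph α F C) (F.card + 1) c) :
    HasSplitting F := by
  classical
  obtain ⟨c, hc⟩ := h
  set kP : Fin C → Finset (Bool × {S // S ∈ F}) :=
    fun i => Finset.univ.filter (fun p => c (Sum.inl (Sum.inl p)) = i) with hkP
  set kS : Fin C → Finset (Fin ((C - 2) * (F.card + 2))) :=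
    fun i => Finset.univ.filter (fun j => c (Sum.inl (Sum.inr j)) = i) with hkS
  set zb : Bool → Fin C → Finset (Fin (C * (F.card + 2))) :=
    fun b i => Finset.univ.filter (fun j => c (Sum.inr (Sum.inr (b, j))) = i) with hzb
  have memkP : ∀ (i : Fin C) p, p ∈ kP i ↔ c (Sum.inl (Sum.inl p)) = i := by
    intro i p; simp [hkP]
  have memkS : ∀ (i : Fin C) j, j ∈ kS i ↔ c (Sum.inl (Sum.inr j)) = i := by
    intro i j; simp [hkS]
  have memzb : ∀ (b : Bool) (i : Fin C) j, j ∈ zb b i ↔ c (Sum.inr (Sum.inr (b, j))) = i := by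
    intro b i j; simp [hzb]
  have injP : Function.Injective
      (fun p : Bool × {S // S ∈ F} => (Sum.inl (Sum.inl p) : SplitVtx α F C)) :=
    fun u v huv => by simpa using huv
  have injS : Function.Injective
      (fun j : Fin ((C - 2) * (F.card + 2)) => (Sum.inl (Sum.inr j) : SplitVtx α F C)) :=
    fun u v huv => by simpa using huv
  have injZ : ∀ b : Bool, Function.Injective
      (fun j : Fin (C * (F.card + 2)) => (Sum.inr (Sum.inr (b, j)) : SplitVtx α F C)) :=
    fun b u v huv => by simpa using huv
  have injT : ∀ b : Bool, Function.Injective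
      (fun T : {S // S ∈ F} => (Sum.inl (Sum.inl (b, T)) : SplitVtx α F C)) :=
    fun b u v huv => by simpa using huv
  -- sums of color class sizes
  have hSumP : ∑ i : Fin C, (kP i).card = 2 * F.card := by
    have h0 := Finset.card_eq_sum_card_fiberwise
      (s := (Finset.univ : Finset (Bool × {S // S ∈ F}))) (t := Finset.univ)
      (f := fun p => c (Sum.inl (Sum.inl p))) (fun x _ => Finset.mem_univ _)
    rw [hkP, ← h0]
    simp [Fintype.card_coe, two_mul]
  have hSumS : ∑ i : Fin C, (kS i).card = (C - 2) * (F.card + 2) := by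
    have h0 := Finset.card_eq_sum_card_fiberwise
      (s := (Finset.univ : Finset (Fin ((C - 2) * (F.card + 2))))) (t := Finset.univ)
      (f := fun j => c (Sum.inl (Sum.inr j))) (fun x _ => Finset.mem_univ _)
    rw [hkS, ← h0]
    simp
  have hSumZ : ∀ b : Bool, ∑ i : Fin C, (zb b i).card = C * (F.card + 2) := by
    intro b
    have h0 := Finset.card_eq_sum_card_fiberwise
      (s := (Finset.univ : Finset (Fin (C * (F.card + 2))))) (t := Finset.univ)
      (f := fun j => c (Sum.inr (Sum.inr (b, j)))) (fun x _ => Finset.mem_univ _)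
    rw [hzb, ← h0]
    simp
  -- every color class inside the clique has size at most F.card + 2
  have hKb : ∀ i : Fin C, (kP i).card + (kS i).card ≤ F.card + 2 := by
    intro i
    by_cases hne : (kP i).Nonempty ∨ (kS i).Nonempty
    · set s : Finset (SplitVtx α F C) :=
        ((kP i).image fun p => Sum.inl (Sum.inl p)) ∪
        ((kS i).image fun j => Sum.inl (Sum.inr j)) with hs
      have d1 : Disjoint ((kP i).image fun p => (Sum.inl (Sum.inl p) : SplitVtx α F C))
          ((kS i).image fun j => Sum.inl (Sum.inr j)) := by
        rw [Finset.disjoint_left]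
        rintro w hw1 hw2
        obtain ⟨p, _, rfl⟩ := Finset.mem_image.mp hw1
        obtain ⟨j, _, hj⟩ := Finset.mem_image.mp hw2
        simp at hj
      have hcard : s.card = (kP i).card + (kS i).card := by
        rw [hs, Finset.card_union_of_disjoint d1,
          Finset.card_image_of_injective _ injP, Finset.card_image_of_injective _ injS]
      have hmem : ∀ w ∈ s, (∃ u, w = Sum.inl u) ∧ c w = i := by
        intro w hw
        rw [hs] at hw
        rcases Finset.mem_union.mp hw with hw | hw
        · obtain ⟨p, hp, rfl⟩ := Finset.mem_image.mp hw
          exact ⟨⟨_, rfl⟩, (memkP i p).mp hp⟩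
        · obtain ⟨j, hj, rfl⟩ := Finset.mem_image.mp hw
          exact ⟨⟨_, rfl⟩, (memkS i j).mp hj⟩
      have key : ∃ v0 ∈ s, c v0 = i := by
        rcases hne with ⟨p, hp⟩ | ⟨j, hj⟩
        · exact ⟨Sum.inl (Sum.inl p), by
            rw [hs]; exact Finset.mem_union_left _ (Finset.mem_image_of_mem _ hp),
            (memkP i p).mp hp⟩
        · exact ⟨Sum.inl (Sum.inr j), by
            rw [hs]; exact Finset.mem_union_right _ (Finset.mem_image_of_mem _ hj),
            (memkS i j).mp hj⟩
      obtain ⟨v0, hv0, hc0⟩ := key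
      obtain ⟨u0, rfl⟩ := (hmem v0 hv0).1
      have hd := def_lb' (splitGraph α F C) c _ s hv0
        (fun w hw hwv => by
          obtain ⟨⟨u, rfl⟩, _⟩ := hmem w hw
          exact adjCC u0 u (by rintro rfl; exact hwv rfl))
        (fun w hw => by rw [(hmem w hw).2, hc0])
      have := hc (Sum.inl u0)
      omega
    · push_neg at hne
      obtain ⟨h1, h2⟩ := hne
      rw [h1, h2]
      simp
  -- there is a color avoided by K_b ∪ K*
  have hOcc : ∀ bb : Bool, ∃ aa : Fin C,
      (∀ T : {S // S ∈ F}, c (Sum.inl (Sum.inl (bb, T))) ≠ aa) ∧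
      (∀ j : Fin ((C - 2) * (F.card + 2)), c (Sum.inl (Sum.inr j)) ≠ aa) := by
    intro bb
    by_contra hcon
    push_neg at hcon
    have hbound : ∀ i : Fin C,
        (kP i).card + (kS i).card + (zb bb i).card ≤ F.card + 2 := by
      intro i
      set s : Finset (SplitVtx α F C) :=
        (((kP i).image fun p => Sum.inl (Sum.inl p)) ∪
        ((kS i).image fun j => Sum.inl (Sum.inr j))) ∪
        ((zb bb i).image fun j => Sum.inr (Sum.inr (bb, j))) with hs
      have d1 : Disjoint ((kP i).image fun p => (Sum.inl (Sum.inl p) : SplitVtx α F C))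
          ((kS i).image fun j => Sum.inl (Sum.inr j)) := by
        rw [Finset.disjoint_left]
        rintro w hw1 hw2
        obtain ⟨p, _, rfl⟩ := Finset.mem_image.mp hw1
        obtain ⟨j, _, hj⟩ := Finset.mem_image.mp hw2
        simp at hj
      have d2 : Disjoint (((kP i).image fun p => (Sum.inl (Sum.inl p) : SplitVtx α F C)) ∪
          ((kS i).image fun j => Sum.inl (Sum.inr j)))
          ((zb bb i).image fun j => Sum.inr (Sum.inr (bb, j))) := by
        rw [Finset.disjoint_left]
        rintro w hw1 hw2
        obtain ⟨j, _, rfl⟩ := Finset.mem_image.mp hw2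
        rcases Finset.mem_union.mp hw1 with hw | hw
        · obtain ⟨p, _, hp⟩ := Finset.mem_image.mp hw
          simp at hp
        · obtain ⟨j', _, hj⟩ := Finset.mem_image.mp hw
          simp at hj
      have hcard : s.card = (kP i).card + (kS i).card + (zb bb i).card := by
        rw [hs, Finset.card_union_of_disjoint d2, Finset.card_union_of_disjoint d1,
          Finset.card_image_of_injective _ injP, Finset.card_image_of_injective _ injS,
          Finset.card_image_of_injective _ (injZ bb)]
      have hmem : ∀ w ∈ s,
          ((∃ u, w = Sum.inl u) ∨ ∃ j, w = Sum.inr (Sum.inr (bb, j))) ∧ c w = i := by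
        intro w hw
        rw [hs] at hw
        rcases Finset.mem_union.mp hw with hw | hw
        · rcases Finset.mem_union.mp hw with hw | hw
          · obtain ⟨p, hp, rfl⟩ := Finset.mem_image.mp hw
            exact ⟨Or.inl ⟨_, rfl⟩, (memkP i p).mp hp⟩
          · obtain ⟨j, hj, rfl⟩ := Finset.mem_image.mp hw
            exact ⟨Or.inl ⟨_, rfl⟩, (memkS i j).mp hj⟩
        · obtain ⟨j, hj, rfl⟩ := Finset.mem_image.mp hw
          exact ⟨Or.inr ⟨_, rfl⟩, (memzb bb i j).mp hj⟩
      have key : ∃ v0 ∈ s, c v0 = i ∧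
          ∀ w ∈ s, w ≠ v0 → (splitGraph α F C).Adj v0 w := by
        rcases Classical.em (∃ T, c (Sum.inl (Sum.inl (bb, T))) = i) with ⟨T, hT⟩ | hT
        · refine ⟨Sum.inl (Sum.inl (bb, T)), ?_, hT, ?_⟩
          · rw [hs]
            exact Finset.mem_union_left _ (Finset.mem_union_left _
              (Finset.mem_image_of_mem _ ((memkP i (bb, T)).mpr hT)))
          · intro w hw hwv
            rcases (hmem w hw).1 with ⟨u, rfl⟩ | ⟨j, rfl⟩
            · exact adjCC _ u (by rintro rfl; exact hwv rfl)
            · exact adjKZ bb T j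
        · have hT' : ∀ T, c (Sum.inl (Sum.inl (bb, T))) ≠ i := by push_neg at hT; exact hT
          obtain ⟨j0, hj0⟩ := hcon i hT'
          refine ⟨Sum.inl (Sum.inr j0), ?_, hj0, ?_⟩
          · rw [hs]
            exact Finset.mem_union_left _ (Finset.mem_union_right _
              (Finset.mem_image_of_mem _ ((memkS i j0).mpr hj0)))
          · intro w hw hwv
            exact adjStar j0 w hwv
      obtain ⟨v0, hv0, hc0, hadj⟩ := key
      have hd := def_lb' (splitGraph α F C) c v0 s hv0 hadj
        (fun w hw => by rw [(hmem w hw).2, hc0])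
      have := hc v0
      omega
    have hsum : ∑ i : Fin C, ((kP i).card + (kS i).card + (zb bb i).card)
        ≤ C * (F.card + 2) := by
      calc ∑ i : Fin C, ((kP i).card + (kS i).card + (zb bb i).card)
          ≤ ∑ _i : Fin C, (F.card + 2) := Finset.sum_le_sum (fun i _ => hbound i)
        _ = C * (F.card + 2) := by simp [Finset.sum_const, Finset.card_univ, mul_comm]
    rw [Finset.sum_add_distrib, Finset.sum_add_distrib, hSumP, hSumS, hSumZ] at hsum
    have e1 : (C - 2) * (F.card + 2) + 2 * (F.card + 2) = C * (F.card + 2) := by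
      rw [← Nat.add_mul, Nat.sub_add_cancel hC]
    nlinarith
  obtain ⟨a, hA1, hA2⟩ := hOcc false
  obtain ⟨b, hB1, hB2⟩ := hOcc true
  have hkSa : (kS a).card = 0 := by
    rw [Finset.card_eq_zero, hkS]
    exact Finset.filter_eq_empty_iff.mpr (fun j _ => hA2 j)
  have hkSb : (kS b).card = 0 := by
    rw [Finset.card_eq_zero, hkS]
    exact Finset.filter_eq_empty_iff.mpr (fun j _ => hB2 j)
  have hab : a ≠ b := by
    intro heq
    subst heq
    have hkPa : (kP a).card = 0 := by
      rw [Finset.card_eq_zero, hkP]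
      refine Finset.filter_eq_empty_iff.mpr (fun p _ => ?_)
      rcases p with ⟨bb, T⟩
      cases bb
      · exact hA1 T
      · exact hB1 T
    have h1 : ∑ i ∈ Finset.univ.erase a, ((kP i).card + (kS i).card)
        + ((kP a).card + (kS a).card)
        = ∑ i : Fin C, ((kP i).card + (kS i).card) :=
      Finset.sum_erase_add _ _ (Finset.mem_univ a)
    have h2 : ∑ i ∈ Finset.univ.erase a, ((kP i).card + (kS i).card)
        ≤ (Finset.univ.erase a).card * (F.card + 2) := by
      have := Finset.sum_le_card_nsmul (Finset.univ.erase a)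
        (fun i => (kP i).card + (kS i).card) (F.card + 2) (fun i _ => hKb i)
      simpa using this
    have h3 : (Finset.univ.erase a).card = C - 1 := by
      rw [Finset.card_erase_of_mem (Finset.mem_univ a)]
      simp
    have hPS : ∑ i : Fin C, ((kP i).card + (kS i).card)
        = 2 * F.card + (C - 2) * (F.card + 2) := by
      rw [Finset.sum_add_distrib, hSumP, hSumS]
    rw [hPS] at h1
    rw [h3] at h2
    have e2 : (C - 1) * (F.card + 2) = (C - 2) * (F.card + 2) + (F.card + 2) := by
      have h4 : C - 1 = C - 2 + 1 := by omega
      rw [h4, Nat.succ_mul]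
    nlinarith
  -- every color other than a, b fills K* with exactly F.card + 2 vertices
  have hstar : ∀ i : Fin C, i ≠ a → i ≠ b → (kS i).card = F.card + 2 := by
    intro i hia hib
    have hba : b ∈ Finset.univ.erase a := Finset.mem_erase.mpr ⟨Ne.symm hab, Finset.mem_univ b⟩
    have hit : i ∈ (Finset.univ.erase a).erase b :=
      Finset.mem_erase.mpr ⟨hib, Finset.mem_erase.mpr ⟨hia, Finset.mem_univ i⟩⟩
    have h3C : 3 ≤ C := by
      have v1 : i.val ≠ a.val := fun hh => hia (Fin.ext hh)
      have v2 : i.val ≠ b.val := fun hh => hib (Fin.ext hh)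
      have v3 : a.val ≠ b.val := fun hh => hab (Fin.ext hh)
      have := i.isLt; have := a.isLt; have := b.isLt
      omega
    have h1 : ∑ j ∈ Finset.univ.erase a, (kS j).card + (kS a).card
        = ∑ j : Fin C, (kS j).card := Finset.sum_erase_add _ _ (Finset.mem_univ a)
    have h2 : ∑ j ∈ (Finset.univ.erase a).erase b, (kS j).card + (kS b).card
        = ∑ j ∈ Finset.univ.erase a, (kS j).card := Finset.sum_erase_add _ _ hba
    have h3 : ∑ j ∈ ((Finset.univ.erase a).erase b).erase i, (kS j).card + (kS i).card
        = ∑ j ∈ (Finset.univ.erase a).erase b, (kS j).card := Finset.sum_erase_add _ _ hit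
    have h4 : ∑ j ∈ ((Finset.univ.erase a).erase b).erase i, (kS j).card
        ≤ (((Finset.univ.erase a).erase b).erase i).card * (F.card + 2) := by
      have := Finset.sum_le_card_nsmul (((Finset.univ.erase a).erase b).erase i)
        (fun j => (kS j).card) (F.card + 2) (fun j _ => le_trans (Nat.le_add_left _ _) (hKb j))
      simpa using this
    have h5 : (((Finset.univ.erase a).erase b).erase i).card = C - 3 := by
      rw [Finset.card_erase_of_mem hit, Finset.card_erase_of_mem hba,
        Finset.card_erase_of_mem (Finset.mem_univ a)]
      simp
      omega
    have e3 : (C - 2) * (F.card + 2) = (C - 3) * (F.card + 2) + (F.card + 2) := by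
      have h6 : C - 2 = C - 3 + 1 := by omega
      rw [h6, Nat.succ_mul]
    have h7 : (kS i).card ≤ F.card + 2 := le_trans (Nat.le_add_left _ _) (hKb i)
    rw [h5] at h4
    rw [hSumS] at h1
    exact le_antisymm h7 (by nlinarith)
  -- K₁ is monochromatic with color b, K₂ with color a
  have hK1 : ∀ T : {S // S ∈ F}, c (Sum.inl (Sum.inl (false, T))) = b := by
    intro T
    by_contra hne
    have h1 := hstar _ (hA1 T) hne
    have h2 : 1 ≤ (kP (c (Sum.inl (Sum.inl (false, T))))).card :=
      Finset.card_pos.mpr ⟨(false, T), (memkP _ _).mpr rfl⟩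
    have h3 := hKb (c (Sum.inl (Sum.inl (false, T))))
    omega
  have hK2 : ∀ T : {S // S ∈ F}, c (Sum.inl (Sum.inl (true, T))) = a := by
    intro T
    by_contra hne
    have h1 := hstar _ hne (hB1 T)
    have h2 : 1 ≤ (kP (c (Sum.inl (Sum.inl (true, T))))).card :=
      Finset.card_pos.mpr ⟨(true, T), (memkP _ _).mpr rfl⟩
    have h3 := hKb (c (Sum.inl (Sum.inl (true, T))))
    omega
  -- every vertex of I is colored a or b
  have hI : ∀ x : α, c (Sum.inr (Sum.inl x)) = a ∨ c (Sum.inr (Sum.inl x)) = b := by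
    intro x
    by_contra hcon
    push_neg at hcon
    obtain ⟨hia, hib⟩ := hcon
    have h1 := hstar _ hia hib
    have h2 : (kS (c (Sum.inr (Sum.inl x)))).Nonempty := by
      rw [← Finset.card_pos, h1]; omega
    obtain ⟨j0, hj0⟩ := h2
    set i := c (Sum.inr (Sum.inl x)) with hi
    set s : Finset (SplitVtx α F C) :=
      ((kS i).image fun j => Sum.inl (Sum.inr j)) ∪ {Sum.inr (Sum.inl x)} with hs
    have d1 : Disjoint ((kS i).image fun j => (Sum.inl (Sum.inr j) : SplitVtx α F C))
        ({Sum.inr (Sum.inl x)} : Finset (SplitVtx α F C)) := by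
      rw [Finset.disjoint_left]
      rintro w hw1 hw2
      obtain ⟨j, _, rfl⟩ := Finset.mem_image.mp hw1
      simp at hw2
    have hcard : s.card = (kS i).card + 1 := by
      rw [hs, Finset.card_union_of_disjoint d1,
        Finset.card_image_of_injective _ injS, Finset.card_singleton]
    have hmem : ∀ w ∈ s, c w = i := by
      intro w hw
      rw [hs] at hw
      rcases Finset.mem_union.mp hw with hw | hw
      · obtain ⟨j, hj, rfl⟩ := Finset.mem_image.mp hw
        exact (memkS i j).mp hj
      · rw [Finset.mem_singleton.mp hw]
    have hv0 : Sum.inl (Sum.inr j0) ∈ s := by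
      rw [hs]
      exact Finset.mem_union_left _ (Finset.mem_image_of_mem _ hj0)
    have hd := def_lb' (splitGraph α F C) c (Sum.inl (Sum.inr j0)) s hv0
      (fun w hw hwv => adjStar j0 w hwv)
      (fun w hw => by rw [hmem w hw, hmem _ hv0])
    have := hc (Sum.inl (Sum.inr j0))
    omega
  -- a monochromatic K_b forbids monochromatic triples in I
  have hnotall : ∀ (bb : Bool) (col : Fin C) (S : Finset α) (hSF : S ∈ F),
      (∀ T : {S // S ∈ F}, c (Sum.inl (Sum.inl (bb, T))) = col) →
      ¬ (∀ x ∈ S, c (Sum.inr (Sum.inl x)) = col) := by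
    intro bb col S hSF hKall hall
    set s : Finset (SplitVtx α F C) :=
      ((Finset.univ : Finset {S // S ∈ F}).image fun T => Sum.inl (Sum.inl (bb, T))) ∪
      (S.image fun x => Sum.inr (Sum.inl x)) with hs
    have d1 : Disjoint
        ((Finset.univ : Finset {S // S ∈ F}).image
          fun T => (Sum.inl (Sum.inl (bb, T)) : SplitVtx α F C))
        (S.image fun x => Sum.inr (Sum.inl x)) := by
      rw [Finset.disjoint_left]
      rintro w hw1 hw2
      obtain ⟨T, _, rfl⟩ := Finset.mem_image.mp hw1
      obtain ⟨x, _, hx⟩ := Finset.mem_image.mp hw2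
      simp at hx
    have hcard : s.card = F.card + 3 := by
      rw [hs, Finset.card_union_of_disjoint d1,
        Finset.card_image_of_injective _ (injT bb),
        Finset.card_image_of_injective _ (fun u v huv => by simpa using huv :
          Function.Injective (fun x : α => (Sum.inr (Sum.inl x) : SplitVtx α F C))),
        Finset.card_univ, Fintype.card_coe, hF S hSF]
    have hmem : ∀ w ∈ s,
        ((∃ T, w = Sum.inl (Sum.inl (bb, T))) ∨ (∃ x, x ∈ S ∧ w = Sum.inr (Sum.inl x)))
          ∧ c w = col := by
      intro w hw
      rw [hs] at hw
      rcases Finset.mem_union.mp hw with hw | hw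
      · obtain ⟨T, _, rfl⟩ := Finset.mem_image.mp hw
        exact ⟨Or.inl ⟨T, rfl⟩, hKall T⟩
      · obtain ⟨x, hx, rfl⟩ := Finset.mem_image.mp hw
        exact ⟨Or.inr ⟨x, hx, rfl⟩, hall x hx⟩
    have hv0 : Sum.inl (Sum.inl (bb, (⟨S, hSF⟩ : {S // S ∈ F}))) ∈ s := by
      rw [hs]
      exact Finset.mem_union_left _ (Finset.mem_image_of_mem _ (Finset.mem_univ _))
    have hd := def_lb' (splitGraph α F C) c _ s hv0
      (fun w hw hwv => by
        rcases (hmem w hw).1 with ⟨T, rfl⟩ | ⟨x, hx, rfl⟩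
        · exact adjCC _ _ (by rintro heq; exact hwv (by rw [heq]))
        · exact adjSI bb ⟨S, hSF⟩ x hx)
      (fun w hw => by rw [(hmem w hw).2, (hmem _ hv0).2])
    have := hc (Sum.inl (Sum.inl (bb, (⟨S, hSF⟩ : {S // S ∈ F}))))
    omega
  -- assemble the splitting
  refine ⟨Finset.univ.filter (fun x => c (Sum.inr (Sum.inl x)) = a), fun S hS => ?_⟩
  have hnb := hnotall false b S hS hK1
  have hna := hnotall true a S hS hK2
  push_neg at hnb hna
  obtain ⟨x, hxS, hxb⟩ := hnb
  obtain ⟨y, hyS, hya⟩ := hna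
  have hxa : c (Sum.inr (Sum.inl x)) = a := (hI x).resolve_right hxb
  constructor
  · exact ⟨x, Finset.mem_inter.mpr ⟨hxS,
      Finset.mem_filter.mpr ⟨Finset.mem_univ x, hxa⟩⟩⟩
  · exact ⟨y, Finset.mem_sdiff.mpr ⟨hyS,
      fun hmem => hya (Finset.mem_filter.mp hmem).2⟩⟩
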